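/- Given probability vectors p, q, r and a positive Gibbs vector γ, there exists a thermal tensor T (stochastic tensor with T(γ, s) = γ for all probability vectors s) mapping (p,q) to r if and only if p thermomajorizes r with respect to γ. -/

import Mathlib

open Finset

def IsProbVec {d : ℕ} (p : Fin d → ℝ) : Prop :=
  (∀ i, 0 ≤ p i) ∧ ∑ i, p i = 1

def tApply {d : ℕ} (T : Fin d → Fin d → Fin d → ℝ) (p q : Fin d → ℝ) : Fin d → ℝ :=
  fun i => ∑ j, ∑ k, T i j k * p j * q k

def IsStochasticMatrix {d : ℕ} (Λ : Matrix (Fin d) (Fin d) ℝ) : Prop :=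
  (∀ i j, 0 ≤ Λ i j) ∧ (∀ j, ∑ i, Λ i j = 1)

def ThermoMaj {d : ℕ} (γ p r : Fin d → ℝ) : Prop :=
  ∃ Λ : Matrix (Fin d) (Fin d) ℝ,
    IsStochasticMatrix Λ ∧ Λ.mulVec γ = γ ∧ Λ.mulVec p = r

/-- There exists a thermal tensor mapping `(p,q)` to `r` iff `p` thermomajorizes
`r` with respect to `γ`. -/
theorem stmt5 {d : ℕ} (γ : Fin d → ℝ) (hγ : IsProbVec γ) (hγpos : ∀ i, 0 < γ i)
    (p q r : Fin d → ℝ) (hp : IsProbVec p) (hq : IsProbVec q) (hr : IsProbVec r) :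
    (∃ T : Fin d → Fin d → Fin d → ℝ,
        (∀ i j k, 0 ≤ T i j k) ∧ (∀ j k, ∑ i, T i j k = 1) ∧
        (∀ s : Fin d → ℝ, IsProbVec s → tApply T γ s = γ) ∧
        tApply T p q = r) ↔
      ThermoMaj γ p r := by
  constructor
  · rintro ⟨T, hTnn, hTcol, hTtherm, hTpq⟩
    refine ⟨fun i j => ∑ k, T i j k * q k, ⟨fun i j => ?_, fun j => ?_⟩, ?_, ?_⟩
    · exact Finset.sum_nonneg fun k _ => mul_nonneg (hTnn i j k) (hq.1 k)
    · rw [Finset.sum_comm]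
      calc ∑ k, ∑ i, T i j k * q k = ∑ k, q k := by
            refine Finset.sum_congr rfl fun k _ => ?_
            rw [← Finset.sum_mul, hTcol j k, one_mul]
        _ = 1 := hq.2
    · have := hTtherm q hq
      funext i
      have hi := congrFun this i
      simp only [tApply] at hi
      simp only [Matrix.mulVec]
      simp only [dotProduct]
      rw [← hi]
      refine Finset.sum_congr rfl fun j _ => ?_
      rw [Finset.sum_mul]
      exact Finset.sum_congr rfl fun k _ => by ring
    · funext i
      have hi := congrFun hTpq i
      simp only [tApply] at hi
      simp only [Matrix.mulVec]
      simp only [dotProduct]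
      rw [← hi]
      refine Finset.sum_congr rfl fun j _ => ?_
      rw [Finset.sum_mul]
      refine Finset.sum_congr rfl fun k _ => ?_
      ring
  · rintro ⟨Λ, ⟨hnn, hcol⟩, hγfix, hΛp⟩
    refine ⟨fun i j _ => Λ i j, fun i j k => hnn i j, fun j k => hcol j, ?_, ?_⟩
    · intro s hs
      funext i
      simp only [tApply]
      calc ∑ j, ∑ k, Λ i j * γ j * s k = ∑ j, Λ i j * γ j := by
            refine Finset.sum_congr rfl fun j _ => ?_
            rw [← Finset.mul_sum, hs.2, mul_one]
        _ = γ i := congrFun hγfix i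
    · funext i
      simp only [tApply]
      calc ∑ j, ∑ k, Λ i j * p j * q k = ∑ j, Λ i j * p j := by
            refine Finset.sum_congr rfl fun j _ => ?_
            rw [← Finset.mul_sum, hq.2, mul_one]
        _ = r i := congrFun hΛp i
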